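/- Let a be a positive integer, b an integer coprime to a, and ω = exp(2πi/a). Then, as complex numbers, ∑_{j=1}^{a−1} ((b·j/a))·((j/a)) = −(1/(4a))·∑_{j=1}^{a−1} (1 + ω^{−j})(1 + ω^{−bj}) / ((1 − ω^{−j})(1 − ω^{−bj})). -/

import Mathlib

open scoped BigOperators

/-- The sawtooth function `((x))`: `x - ⌊x⌋ - 1/2` if `x` is not an integer, `0` otherwise. -/
noncomputable def sawtooth (x : ℝ) : ℝ :=
  if Int.fract x = 0 then 0 else Int.fract x - 1/2

open Finset in


lemma range_eq_insert (a : ℕ) (ha : 0 < a) :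
    Finset.range a = insert 0 (Finset.Ioo 0 a) := by
  ext x; simp [Finset.mem_Ioo]; omega

section
variable {a : ℕ} {ω : ℂ}

lemma zpow_congr (ha : 0 < a) (hp : IsPrimitiveRoot ω a) {m m' : ℤ} (h : (a:ℤ) ∣ m - m') :
    ω ^ m = ω ^ m' := by
  have hω0 : ω ≠ 0 := hp.ne_zero ha.ne'
  have h1 : ω ^ (m - m') = 1 := (hp.zpow_eq_one_iff_dvd _).2 h
  calc ω ^ m = ω ^ (m' + (m - m')) := by ring_nf
    _ = ω ^ m' * ω ^ (m - m') := zpow_add₀ hω0 _ _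
    _ = ω ^ m' := by rw [h1, mul_one]

-- L1
lemma sum_range_zpow (ha : 0 < a) (hp : IsPrimitiveRoot ω a) (m : ℤ) :
    ∑ j ∈ Finset.range a, ω ^ ((j:ℤ) * m) = if (a:ℤ) ∣ m then (a:ℂ) else 0 := by
  have hω0 : ω ≠ 0 := hp.ne_zero ha.ne'
  by_cases hd : (a:ℤ) ∣ m
  · simp only [if_pos hd]
    have : ∀ j ∈ Finset.range a, ω ^ ((j:ℤ) * m) = 1 := by
      intro j hj
      rw [show ((j:ℤ)*m) = (j:ℤ)*m - 0 + 0 by ring]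
      have := zpow_congr ha hp (m := (j:ℤ)*m) (m' := 0) (by simpa using hd.mul_left _)
      simpa using this
    rw [Finset.sum_congr rfl this]; simp
  · simp only [if_neg hd]
    set x := ω ^ m with hx
    have hx1 : x ≠ 1 := fun h => hd ((hp.zpow_eq_one_iff_dvd m).1 h)
    have hxa : x ^ a = 1 := by
      rw [hx, ← zpow_natCast, ← zpow_mul]
      have := zpow_congr ha hp (m := m * a) (m' := 0) (by simpa using Dvd.intro m rfl)
      simpa using this
    have : ∀ j ∈ Finset.range a, ω ^ ((j:ℤ) * m) = x ^ j := by
      intro j hj; rw [hx, ← zpow_natCast (ω ^ m) j, ← zpow_mul]; ring_nf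
    rw [Finset.sum_congr rfl this, geom_sum_eq hx1, hxa]
    simp

-- L1'
lemma sum_Ioo_zpow (ha : 0 < a) (hp : IsPrimitiveRoot ω a) (m : ℤ) :
    ∑ j ∈ Finset.Ioo 0 a, ω ^ ((j:ℤ) * m) = (if (a:ℤ) ∣ m then (a:ℂ) else 0) - 1 := by
  have := sum_range_zpow ha hp m
  rw [range_eq_insert a ha, Finset.sum_insert (by simp)] at this
  simp only [Nat.cast_zero, zero_mul, zpow_zero] at this
  linear_combination this
end

lemma geom_deriv (x : ℂ) (n : ℕ) :
    (x - 1) * ∑ j ∈ Finset.range n, (j:ℂ) * x ^ j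
      = ((n:ℂ) - 1) * x ^ n - ∑ j ∈ Finset.range n, x ^ j + 1 := by
  induction n with
  | zero => simp
  | succ n ih =>
    rw [Finset.sum_range_succ, Finset.sum_range_succ (f := fun j => x ^ j)]
    push_cast
    linear_combination ih

section
variable {a : ℕ} {ω : ℂ}

-- L2 forward transform
lemma forward (ha : 0 < a) (hp : IsPrimitiveRoot ω a) {k : ℤ} (hk : ¬ (a:ℤ) ∣ k) :
    ∑ j ∈ Finset.Ioo 0 a, ((j:ℂ)/a - 1/2) * ω ^ ((j:ℤ) * k)
      = (1 + ω ^ k) / (2 * (ω ^ k - 1)) := by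
  have hω0 : ω ≠ 0 := hp.ne_zero ha.ne'
  set x := ω ^ k with hx
  have hx1 : x ≠ 1 := fun h => hk ((hp.zpow_eq_one_iff_dvd k).1 h)
  have hxa : x ^ a = 1 := by
    rw [hx, ← zpow_natCast, ← zpow_mul]
    have := zpow_congr ha hp (m := k * a) (m' := 0) (by simpa using Dvd.intro k rfl)
    simpa using this
  have hxe : ∀ j ∈ Finset.Ioo 0 a, ((j:ℂ)/a - 1/2) * ω ^ ((j:ℤ) * k)
      = ((j:ℂ)/a - 1/2) * x ^ j := by
    intro j hj; rw [hx, ← zpow_natCast (ω ^ k) j, ← zpow_mul]; ring_nf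
  rw [Finset.sum_congr rfl hxe]
  -- power sums
  have hgeo : ∑ j ∈ Finset.range a, x ^ j = 0 := by
    have := sum_range_zpow ha hp k
    rw [if_neg hk] at this
    rw [← this]
    refine Finset.sum_congr rfl fun j hj => ?_
    rw [hx, ← zpow_natCast (ω ^ k) j, ← zpow_mul]; ring_nf
  have hJ : (x - 1) * ∑ j ∈ Finset.range a, (j:ℂ) * x ^ j = (a:ℂ) := by
    rw [geom_deriv, hxa, hgeo]; ring
  have hJ' : ∑ j ∈ Finset.range a, (j:ℂ) * x ^ j
      = ∑ j ∈ Finset.Ioo 0 a, (j:ℂ) * x ^ j := by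
    rw [range_eq_insert a ha, Finset.sum_insert (by simp)]; simp
  have hG' : ∑ j ∈ Finset.Ioo 0 a, x ^ j = -1 := by
    have := hgeo
    rw [range_eq_insert a ha, Finset.sum_insert (by simp)] at this
    simp only [pow_zero] at this
    linear_combination this
  rw [hJ'] at hJ
  have ha0 : (a:ℂ) ≠ 0 := Nat.cast_ne_zero.2 ha.ne'
  have hx1' : x - 1 ≠ 0 := sub_ne_zero.2 hx1
  have expand : ∑ j ∈ Finset.Ioo 0 a, ((j:ℂ)/a - 1/2) * x ^ j
      = (1/a) * ∑ j ∈ Finset.Ioo 0 a, (j:ℂ) * x ^ j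
        - (1/2) * ∑ j ∈ Finset.Ioo 0 a, x ^ j := by
    rw [Finset.mul_sum, Finset.mul_sum, ← Finset.sum_sub_distrib]
    refine Finset.sum_congr rfl fun j hj => ?_; ring
  rw [expand, hG']
  have hJval : ∑ j ∈ Finset.Ioo 0 a, (j:ℂ) * x ^ j = (a:ℂ)/(x-1) := by
    field_simp
    linear_combination hJ
  rw [hJval]
  field_simp
  ring
end
section
variable {a : ℕ} {ω : ℂ}

-- L3
lemma saw_sum_zero (ha : 0 < a) :
    ∑ j ∈ Finset.Ioo 0 a, ((j:ℂ)/a - 1/2) = 0 := by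
  have ha0 : (a:ℂ) ≠ 0 := Nat.cast_ne_zero.2 ha.ne'
  have h1 : (∑ j ∈ Finset.Ioo 0 a, (j:ℂ)) * 2 = (a:ℂ) * ((a:ℂ) - 1) := by
    have hr : ∑ j ∈ Finset.range a, (j:ℂ) = ∑ j ∈ Finset.Ioo 0 a, (j:ℂ) := by
      rw [range_eq_insert a ha, Finset.sum_insert (by simp)]; simp
    have hgauss := Finset.sum_range_id_mul_two a
    have hc : (∑ i ∈ Finset.range a, (i:ℂ)) * 2 = (a:ℂ) * ((a:ℂ) - 1) := by
      have h2 := congrArg (fun n : ℕ => (n:ℂ)) hgauss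
      push_cast [Nat.cast_sub (by omega : 1 ≤ a)] at h2
      linear_combination h2
    rw [← hr]
    exact hc
  have hcard : ((Finset.Ioo 0 a).card : ℂ) = (a:ℂ) - 1 := by
    rw [Nat.card_Ioo, (by omega : a - 0 - 1 = a - 1), Nat.cast_sub (by omega : 1 ≤ a)]
    simp
  rw [Finset.sum_sub_distrib, Finset.sum_const, nsmul_eq_mul, hcard,
    ← Finset.sum_div]
  field_simp
  linear_combination h1

-- L5
lemma c_sum_zero (ha : 0 < a) (hp : IsPrimitiveRoot ω a) :
    ∑ k ∈ Finset.Ioo 0 a, (1 + ω ^ (k:ℤ)) / (2 * (ω ^ (k:ℤ) - 1)) = 0 := by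
  have hnd : ∀ k ∈ Finset.Ioo 0 a, ¬ (a:ℤ) ∣ (k:ℤ) := by
    intro k hk hdvd
    rw [Finset.mem_Ioo] at hk
    rw [Int.natCast_dvd_natCast] at hdvd
    exact absurd (Nat.le_of_dvd hk.1 hdvd) (by omega)
  calc ∑ k ∈ Finset.Ioo 0 a, (1 + ω ^ (k:ℤ)) / (2 * (ω ^ (k:ℤ) - 1))
      = ∑ k ∈ Finset.Ioo 0 a, ∑ j ∈ Finset.Ioo 0 a, ((j:ℂ)/a - 1/2) * ω ^ ((j:ℤ) * (k:ℤ)) := by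
        exact Finset.sum_congr rfl fun k hk => (forward ha hp (hnd k hk)).symm
    _ = ∑ j ∈ Finset.Ioo 0 a, ((j:ℂ)/a - 1/2) * ∑ k ∈ Finset.Ioo 0 a, ω ^ ((k:ℤ) * (j:ℤ)) := by
        rw [Finset.sum_comm]
        refine Finset.sum_congr rfl fun j hj => ?_
        rw [Finset.mul_sum]
        refine Finset.sum_congr rfl fun k hk => ?_
        rw [mul_comm (j:ℤ) (k:ℤ)]
    _ = ∑ j ∈ Finset.Ioo 0 a, ((j:ℂ)/a - 1/2) * (-1) := by
        refine Finset.sum_congr rfl fun j hj => ?_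
        rw [sum_Ioo_zpow ha hp, if_neg (hnd j hj)]
        ring_nf
    _ = 0 := by
        rw [← Finset.sum_mul, saw_sum_zero ha]; ring
end

lemma fract_div (a : ℕ) (ha : 0 < a) (m : ℤ) :
    Int.fract ((m:ℝ)/a) = ((m % (a:ℤ) : ℤ) : ℝ)/a := by
  have ha0 : (a:ℝ) ≠ 0 := Nat.cast_ne_zero.2 ha.ne'
  have hap : (0:ℝ) < a := by exact_mod_cast ha
  have hsplit : (m:ℝ)/a = ((m / (a:ℤ) : ℤ):ℝ) + ((m % (a:ℤ) : ℤ):ℝ)/a := by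
    have h1 := Int.mul_ediv_add_emod m (a:ℤ)
    have h2 := congrArg (fun z : ℤ => (z:ℝ)) h1
    push_cast at h2
    field_simp
    linarith [h2]
  have hnn : (0:ℤ) ≤ m % (a:ℤ) := Int.emod_nonneg m (by exact_mod_cast ha.ne')
  have hlt : m % (a:ℤ) < (a:ℤ) := Int.emod_lt_of_pos m (by exact_mod_cast ha)
  rw [hsplit, Int.fract_intCast_add, Int.fract_eq_self.2 ⟨?_, ?_⟩]
  · positivity
  · rw [div_lt_one hap]
    exact_mod_cast hlt

section
variable {a : ℕ} {ω : ℂ}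

-- L4 inverse transform
lemma inverse (ha : 0 < a) (hp : IsPrimitiveRoot ω a) {m : ℤ} (hm : ¬ (a:ℤ) ∣ m) :
    ((sawtooth ((m:ℝ)/a) : ℝ) : ℂ)
      = (1/(a:ℂ)) * ∑ k ∈ Finset.Ioo 0 a,
          (1 + ω ^ (k:ℤ)) / (2 * (ω ^ (k:ℤ) - 1)) * ω ^ (-(m * (k:ℤ))) := by
  have hω0 : ω ≠ 0 := hp.ne_zero ha.ne'
  have ha0 : (a:ℂ) ≠ 0 := Nat.cast_ne_zero.2 ha.ne'
  have hnn : (0:ℤ) ≤ m % (a:ℤ) := Int.emod_nonneg m (by exact_mod_cast ha.ne')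
  have hlt : m % (a:ℤ) < (a:ℤ) := Int.emod_lt_of_pos m (by exact_mod_cast ha)
  have hne : m % (a:ℤ) ≠ 0 := fun h => hm (Int.dvd_of_emod_eq_zero h)
  set r : ℕ := (m % (a:ℤ)).toNat with hrdef
  have hrc : ((r:ℤ)) = m % (a:ℤ) := Int.toNat_of_nonneg hnn
  have hr0 : 0 < r := by omega
  have hra : r < a := by omega
  have hnd : ∀ k ∈ Finset.Ioo 0 a, ¬ (a:ℤ) ∣ (k:ℤ) := by
    intro k hk hdvd
    rw [Finset.mem_Ioo] at hk
    rw [Int.natCast_dvd_natCast] at hdvd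
    exact absurd (Nat.le_of_dvd hk.1 hdvd) (by omega)
  -- LHS value
  have hlhs : sawtooth ((m:ℝ)/a) = (r:ℝ)/a - 1/2 := by
    rw [sawtooth, fract_div a ha m, ← hrc]
    rw [if_neg]
    · push_cast; ring
    · have : (0:ℝ) < (r:ℝ)/a := by
        apply div_pos
        · exact_mod_cast hr0
        · exact_mod_cast ha
      push_cast
      intro h
      rw [h] at this
      exact lt_irrefl 0 this
  -- RHS computation
  have hrhs : ∑ k ∈ Finset.Ioo 0 a,
          (1 + ω ^ (k:ℤ)) / (2 * (ω ^ (k:ℤ) - 1)) * ω ^ (-(m * (k:ℤ)))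
      = ((r:ℂ)/a - 1/2) * a := by
    calc ∑ k ∈ Finset.Ioo 0 a, (1 + ω ^ (k:ℤ)) / (2 * (ω ^ (k:ℤ) - 1)) * ω ^ (-(m * (k:ℤ)))
        = ∑ k ∈ Finset.Ioo 0 a, ∑ j ∈ Finset.Ioo 0 a,
            ((j:ℂ)/a - 1/2) * ω ^ ((k:ℤ) * ((j:ℤ) - m)) := by
          refine Finset.sum_congr rfl fun k hk => ?_
          rw [← forward ha hp (hnd k hk), Finset.sum_mul]
          refine Finset.sum_congr rfl fun j hj => ?_
          rw [mul_assoc, ← zpow_add₀ hω0]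
          congr 1
          ring
      _ = ∑ j ∈ Finset.Ioo 0 a, ((j:ℂ)/a - 1/2) * ∑ k ∈ Finset.Ioo 0 a, ω ^ ((k:ℤ) * ((j:ℤ) - m)) := by
          rw [Finset.sum_comm]
          exact Finset.sum_congr rfl fun j hj => by rw [Finset.mul_sum]
      _ = ∑ j ∈ Finset.Ioo 0 a, ((j:ℂ)/a - 1/2) * ((if (a:ℤ) ∣ ((j:ℤ) - m) then (a:ℂ) else 0) - 1) := by
          exact Finset.sum_congr rfl fun j hj => by rw [sum_Ioo_zpow ha hp]
      _ = ∑ j ∈ Finset.Ioo 0 a, (if j = r then ((j:ℂ)/a - 1/2) * a else 0)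
            - ∑ j ∈ Finset.Ioo 0 a, ((j:ℂ)/a - 1/2) := by
          rw [← Finset.sum_sub_distrib]
          refine Finset.sum_congr rfl fun j hj => ?_
          rw [Finset.mem_Ioo] at hj
          have hcond : ((a:ℤ) ∣ ((j:ℤ) - m)) ↔ j = r := by
            constructor
            · intro hd
              have hme : m ≡ (j:ℤ) [ZMOD (a:ℤ)] := Int.modEq_iff_dvd.2 hd
              have hme' : m % (a:ℤ) = (j:ℤ) % (a:ℤ) := hme
              have hj' : (j:ℤ) % (a:ℤ) = (j:ℤ) := Int.emod_eq_of_lt (by positivity) (by exact_mod_cast hj.2)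
              omega
            · intro h
              subst h
              refine Int.ModEq.dvd (?_ : m ≡ ((r:ℕ):ℤ) [ZMOD (a:ℤ)])
              show m % (a:ℤ) = ((r:ℕ):ℤ) % (a:ℤ)
              have hmm : m % (a:ℤ) % (a:ℤ) = m % (a:ℤ) := Int.emod_emod_of_dvd m dvd_rfl
              rw [hrc, hmm]
          rw [mul_sub, mul_one]
          congr 1
          by_cases h : j = r
          · rw [if_pos (hcond.2 h), if_pos h]
          · rw [if_neg (fun hd => h (hcond.1 hd)), if_neg h]; ring
      _ = ((r:ℂ)/a - 1/2) * a := by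
          rw [saw_sum_zero ha, Finset.sum_ite_eq' (Finset.Ioo 0 a) r
            (fun j => ((j:ℂ)/a - 1/2) * a), if_pos (Finset.mem_Ioo.2 ⟨hr0, hra⟩)]
          ring
  rw [hlhs, hrhs]
  push_cast
  field_simp
end
lemma alg_step (u v : ℂ) (hu0 : u ≠ 0) (hv0 : v ≠ 0) (hu1 : u ≠ 1) (hv1 : v ≠ 1) :
    (1+u⁻¹)*(1+v⁻¹)/((1-u⁻¹)*(1-v⁻¹)) = -4 * ((1+u)/(2*(u-1)) * ((1+v⁻¹)/(2*(v⁻¹-1)))) := by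
  have h1 : (1 - u⁻¹) = (u-1)/u := by field_simp
  have h2 : (1 - v⁻¹) = (v-1)/v := by field_simp
  have h3 : (1 + u⁻¹) = (u+1)/u := by field_simp
  have h4 : (1 + v⁻¹) = (v+1)/v := by field_simp
  have h5 : (v⁻¹ - 1) = (1-v)/v := by field_simp
  have hu1' : u - 1 ≠ 0 := sub_ne_zero.2 hu1
  have hv1' : v - 1 ≠ 0 := sub_ne_zero.2 hv1
  have hv1'' : 1 - v ≠ 0 := fun h => hv1' (by linear_combination -h)
  rw [h1, h2, h3, h4, h5]
  field_simp
  ring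

section
variable {a : ℕ} {ω : ℂ}

-- membership and characterization of the residue
lemma resid_mem (ha : 0 < a) {m : ℤ} (hm : ¬ (a:ℤ) ∣ m) :
    (m % (a:ℤ)).toNat ∈ Finset.Ioo 0 a := by
  have hnn : (0:ℤ) ≤ m % (a:ℤ) := Int.emod_nonneg m (by exact_mod_cast ha.ne')
  have hlt : m % (a:ℤ) < (a:ℤ) := Int.emod_lt_of_pos m (by exact_mod_cast ha)
  have hne : m % (a:ℤ) ≠ 0 := fun h => hm (Int.dvd_of_emod_eq_zero h)
  rw [Finset.mem_Ioo]
  omega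

lemma key_iff (ha : 0 < a) {m : ℤ} (hm : ¬ (a:ℤ) ∣ m) {l : ℕ} (hl : l ∈ Finset.Ioo 0 a) :
    ((a:ℤ) ∣ ((l:ℤ) - m)) ↔ l = (m % (a:ℤ)).toNat := by
  have hnn : (0:ℤ) ≤ m % (a:ℤ) := Int.emod_nonneg m (by exact_mod_cast ha.ne')
  have hlt : m % (a:ℤ) < (a:ℤ) := Int.emod_lt_of_pos m (by exact_mod_cast ha)
  rw [Finset.mem_Ioo] at hl
  constructor
  · intro hd
    have hme : m ≡ (l:ℤ) [ZMOD (a:ℤ)] := Int.modEq_iff_dvd.2 hd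
    have hme' : m % (a:ℤ) = (l:ℤ) % (a:ℤ) := hme
    have hl' : (l:ℤ) % (a:ℤ) = (l:ℤ) := Int.emod_eq_of_lt (by positivity) (by exact_mod_cast hl.2)
    omega
  · intro h
    subst h
    refine Int.ModEq.dvd (?_ : m ≡ (((m % (a:ℤ)).toNat : ℕ):ℤ) [ZMOD (a:ℤ)])
    show m % (a:ℤ) = (((m % (a:ℤ)).toNat : ℕ):ℤ) % (a:ℤ)
    have hmm : m % (a:ℤ) % (a:ℤ) = m % (a:ℤ) := Int.emod_emod_of_dvd m dvd_rfl
    rw [Int.toNat_of_nonneg hnn, hmm]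

theorem dedekind_sum_cotangent_formula' (ha : 0 < a) (hp : IsPrimitiveRoot ω a) (b : ℤ)
    (hb : Int.gcd b a = 1) :
    ((∑ j ∈ Finset.Ioo 0 a, sawtooth ((b : ℝ) * (j : ℝ) / a) * sawtooth ((j : ℝ) / a) : ℝ) : ℂ)
      = -(1 / (4 * (a : ℂ))) * ∑ j ∈ Finset.Ioo 0 a,
          ((1 + ω ^ (-(j : ℤ))) * (1 + ω ^ (-(b * (j : ℤ))))) /
          ((1 - ω ^ (-(j : ℤ))) * (1 - ω ^ (-(b * (j : ℤ))))) := by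
  have hω0 : ω ≠ 0 := hp.ne_zero ha.ne'
  have ha0 : (a:ℂ) ≠ 0 := Nat.cast_ne_zero.2 ha.ne'
  have hcop : IsCoprime (a:ℤ) b := by
    rw [Int.isCoprime_iff_gcd_eq_one, Int.gcd_comm]
    exact hb
  have hnd : ∀ j ∈ Finset.Ioo 0 a, ¬ (a:ℤ) ∣ (j:ℤ) := by
    intro j hj hdvd
    rw [Finset.mem_Ioo] at hj
    rw [Int.natCast_dvd_natCast] at hdvd
    exact absurd (Nat.le_of_dvd hj.1 hdvd) (by omega)
  have hndb : ∀ j ∈ Finset.Ioo 0 a, ¬ (a:ℤ) ∣ b * (j:ℤ) :=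
    fun j hj hd => hnd j hj (hcop.dvd_of_dvd_mul_left hd)
  -- abbreviations
  set c : ℕ → ℂ := fun k => (1 + ω ^ (k:ℤ)) / (2 * (ω ^ (k:ℤ) - 1)) with hc
  set d : ℕ → ℂ := fun k => (1 + ω ^ (-(b * (k:ℤ)))) / (2 * (ω ^ (-(b * (k:ℤ))) - 1)) with hd
  -- RHS transformation
  have hRHS : -(1 / (4 * (a : ℂ))) * ∑ j ∈ Finset.Ioo 0 a,
          ((1 + ω ^ (-(j : ℤ))) * (1 + ω ^ (-(b * (j : ℤ))))) /
          ((1 - ω ^ (-(j : ℤ))) * (1 - ω ^ (-(b * (j : ℤ)))))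
      = (1/(a:ℂ)) * ∑ j ∈ Finset.Ioo 0 a, c j * d j := by
    have hterm : ∀ j ∈ Finset.Ioo 0 a,
        ((1 + ω ^ (-(j : ℤ))) * (1 + ω ^ (-(b * (j : ℤ))))) /
          ((1 - ω ^ (-(j : ℤ))) * (1 - ω ^ (-(b * (j : ℤ)))))
        = -4 * (c j * d j) := by
      intro j hj
      have hu1 : ω ^ ((j:ℤ)) ≠ 1 := fun h => hnd j hj ((hp.zpow_eq_one_iff_dvd _).1 h)
      have hv1 : ω ^ (b * (j:ℤ)) ≠ 1 := fun h => hndb j hj ((hp.zpow_eq_one_iff_dvd _).1 h)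
      have hu0 : ω ^ ((j:ℤ)) ≠ 0 := zpow_ne_zero _ hω0
      have hv0 : ω ^ (b * (j:ℤ)) ≠ 0 := zpow_ne_zero _ hω0
      rw [hc, hd]
      simp only
      rw [show (-(j:ℤ)) = -((j:ℤ)) from rfl, zpow_neg, zpow_neg]
      exact alg_step _ _ hu0 hv0 hu1 hv1
    rw [Finset.sum_congr rfl hterm, ← Finset.mul_sum]
    have hS : ∀ S : ℂ, -(1 / (4 * (a:ℂ))) * (-4 * S) = 1/(a:ℂ) * S := by
      intro S
      field_simp
    exact hS _
  rw [hRHS]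
  -- LHS transformation
  have hsaw : ∀ j ∈ Finset.Ioo 0 a,
      ((sawtooth ((b : ℝ) * (j : ℝ) / a) : ℝ) : ℂ) * ((sawtooth ((j : ℝ) / a) : ℝ) : ℂ)
        = ((1/(a:ℂ)) * ∑ k ∈ Finset.Ioo 0 a, c k * ω ^ (-((b * (j:ℤ)) * (k:ℤ))))
          * ((1/(a:ℂ)) * ∑ l ∈ Finset.Ioo 0 a, c l * ω ^ (-((j:ℤ) * (l:ℤ)))) := by
    intro j hj
    have h1 : (b : ℝ) * (j : ℝ) / a = (((b * (j:ℤ) : ℤ)):ℝ) / a := by push_cast; ring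
    have h2 : (j : ℝ) / a = ((((j:ℕ):ℤ)):ℝ) / a := by push_cast; ring
    rw [h1, h2, inverse ha hp (hndb j hj), inverse ha hp (hnd j hj)]
  push_cast
  rw [Finset.sum_congr rfl hsaw]
  -- expand and swap
  have hexpand : ∀ j ∈ Finset.Ioo 0 a,
      ((1/(a:ℂ)) * ∑ k ∈ Finset.Ioo 0 a, c k * ω ^ (-((b * (j:ℤ)) * (k:ℤ))))
        * ((1/(a:ℂ)) * ∑ l ∈ Finset.Ioo 0 a, c l * ω ^ (-((j:ℤ) * (l:ℤ))))
      = (1/(a:ℂ))^2 * ∑ k ∈ Finset.Ioo 0 a, ∑ l ∈ Finset.Ioo 0 a,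
          (c k * c l) * ω ^ ((j:ℤ) * (-(b * (k:ℤ) + (l:ℤ)))) := by
    intro j hj
    have hAB : (∑ k ∈ Finset.Ioo 0 a, c k * ω ^ (-((b * (j:ℤ)) * (k:ℤ))))
        * (∑ l ∈ Finset.Ioo 0 a, c l * ω ^ (-((j:ℤ) * (l:ℤ))))
        = ∑ k ∈ Finset.Ioo 0 a, ∑ l ∈ Finset.Ioo 0 a,
            (c k * c l) * ω ^ ((j:ℤ) * (-(b * (k:ℤ) + (l:ℤ)))) := by
      rw [Finset.sum_mul_sum]
      refine Finset.sum_congr rfl fun k hk => Finset.sum_congr rfl fun l hl => ?_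
      have hmerge : ω ^ (-((b * (j:ℤ)) * (k:ℤ))) * ω ^ (-((j:ℤ) * (l:ℤ)))
          = ω ^ ((j:ℤ) * (-(b * (k:ℤ) + (l:ℤ)))) := by
        rw [← zpow_add₀ hω0]
        congr 1
        ring
      calc (c k * ω ^ (-((b * (j:ℤ)) * (k:ℤ)))) * (c l * ω ^ (-((j:ℤ) * (l:ℤ))))
          = (c k * c l) * (ω ^ (-((b * (j:ℤ)) * (k:ℤ))) * ω ^ (-((j:ℤ) * (l:ℤ)))) := by ring
        _ = _ := by rw [hmerge]
    calc ((1/(a:ℂ)) * ∑ k ∈ Finset.Ioo 0 a, c k * ω ^ (-((b * (j:ℤ)) * (k:ℤ))))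
          * ((1/(a:ℂ)) * ∑ l ∈ Finset.Ioo 0 a, c l * ω ^ (-((j:ℤ) * (l:ℤ))))
        = (1/(a:ℂ))^2 * ((∑ k ∈ Finset.Ioo 0 a, c k * ω ^ (-((b * (j:ℤ)) * (k:ℤ))))
            * (∑ l ∈ Finset.Ioo 0 a, c l * ω ^ (-((j:ℤ) * (l:ℤ))))) := by ring
      _ = _ := by rw [hAB]
  rw [Finset.sum_congr rfl hexpand, ← Finset.mul_sum]
  rw [Finset.sum_comm]
  -- now : (1/a)^2 * ∑_k ∑_j ∑_l ... ; swap inner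
  have hswap : ∀ k ∈ Finset.Ioo 0 a,
      ∑ j ∈ Finset.Ioo 0 a, ∑ l ∈ Finset.Ioo 0 a,
          (c k * c l) * ω ^ ((j:ℤ) * (-(b * (k:ℤ) + (l:ℤ))))
      = ∑ l ∈ Finset.Ioo 0 a, (c k * c l) *
          ((if (a:ℤ) ∣ (-(b * (k:ℤ) + (l:ℤ))) then (a:ℂ) else 0) - 1) := by
    intro k hk
    rw [Finset.sum_comm]
    refine Finset.sum_congr rfl fun l hl => ?_
    rw [← sum_Ioo_zpow ha hp (-(b * (k:ℤ) + (l:ℤ))), Finset.mul_sum]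
  rw [Finset.sum_congr rfl hswap]
  -- split the -1 part
  have hsplit : ∑ k ∈ Finset.Ioo 0 a, ∑ l ∈ Finset.Ioo 0 a, (c k * c l) *
          ((if (a:ℤ) ∣ (-(b * (k:ℤ) + (l:ℤ))) then (a:ℂ) else 0) - 1)
      = ∑ k ∈ Finset.Ioo 0 a, (c k * c (((-(b * (k:ℤ))) % (a:ℤ)).toNat)) * a := by
    have h1 : ∀ k ∈ Finset.Ioo 0 a, ∑ l ∈ Finset.Ioo 0 a, (c k * c l) *
          ((if (a:ℤ) ∣ (-(b * (k:ℤ) + (l:ℤ))) then (a:ℂ) else 0) - 1)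
        = (c k * c (((-(b * (k:ℤ))) % (a:ℤ)).toNat)) * a - c k * ∑ l ∈ Finset.Ioo 0 a, c l := by
      intro k hk
      have hmk : ¬ (a:ℤ) ∣ (-(b * (k:ℤ))) := by
        rw [dvd_neg]; exact hndb k hk
      have hcond : ∀ l ∈ Finset.Ioo 0 a,
          (c k * c l) * ((if (a:ℤ) ∣ (-(b * (k:ℤ) + (l:ℤ))) then (a:ℂ) else 0) - 1)
          = (if l = ((-(b * (k:ℤ))) % (a:ℤ)).toNat then (c k * c l) * a else 0) - c k * c l := by
        intro l hl
        have : ((a:ℤ) ∣ (-(b * (k:ℤ) + (l:ℤ)))) ↔ l = ((-(b * (k:ℤ))) % (a:ℤ)).toNat := by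
          rw [← key_iff ha hmk hl]
          constructor
          · intro h; have := dvd_neg.1 h; exact (by rw [show (l:ℤ) - -(b*(k:ℤ)) = b*(k:ℤ)+(l:ℤ) by ring]; exact this)
          · intro h; rw [show (l:ℤ) - -(b*(k:ℤ)) = b*(k:ℤ)+(l:ℤ) by ring] at h; exact dvd_neg.2 h
        by_cases h : l = ((-(b * (k:ℤ))) % (a:ℤ)).toNat
        · rw [if_pos (this.2 h), if_pos h]; ring
        · rw [if_neg (fun hh => h (this.1 hh)), if_neg h]; ring
      rw [Finset.sum_congr rfl hcond, Finset.sum_sub_distrib,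
        Finset.sum_ite_eq' (Finset.Ioo 0 a) _ (fun l => (c k * c l) * (a:ℂ)),
        if_pos (resid_mem ha hmk), ← Finset.mul_sum]
    rw [Finset.sum_congr rfl h1, Finset.sum_sub_distrib]
    rw [c_sum_zero ha hp]
    simp
  rw [hsplit]
  -- identify c (resid) with d
  have hcd : ∀ k ∈ Finset.Ioo 0 a, c (((-(b * (k:ℤ))) % (a:ℤ)).toNat) = d k := by
    intro k hk
    have hmk : ¬ (a:ℤ) ∣ (-(b * (k:ℤ))) := by rw [dvd_neg]; exact hndb k hk
    have hnn : (0:ℤ) ≤ (-(b * (k:ℤ))) % (a:ℤ) := Int.emod_nonneg _ (by exact_mod_cast ha.ne')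
    have hzp : ω ^ (((((-(b * (k:ℤ))) % (a:ℤ)).toNat : ℕ)):ℤ) = ω ^ (-(b * (k:ℤ))) := by
      apply zpow_congr ha hp
      rw [Int.toNat_of_nonneg hnn]
      have h1 := Int.mul_ediv_add_emod (-(b * (k:ℤ))) (a:ℤ)
      exact ⟨-((-(b * (k:ℤ))) / (a:ℤ)), by linarith⟩
    rw [hc, hd]
    simp only
    rw [hzp]
  rw [Finset.sum_congr rfl (fun k hk => by rw [hcd k hk])]
  rw [← Finset.sum_mul]
  have hfin : ∀ S : ℂ, (1/(a:ℂ))^2 * (S * a) = 1/(a:ℂ) * S := by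
    intro S
    field_simp
  exact hfin _
end

theorem dedekind_sum_cotangent_formula (a : ℕ) (ha : 0 < a) (b : ℤ)
    (hb : Int.gcd b a = 1) :
    ((∑ j ∈ Finset.Ioo 0 a, sawtooth ((b : ℝ) * (j : ℝ) / a) * sawtooth ((j : ℝ) / a) : ℝ) : ℂ)
      = -(1 / (4 * (a : ℂ))) * ∑ j ∈ Finset.Ioo 0 a,
          ((1 + Complex.exp (2 * Real.pi * Complex.I / a) ^ (-(j : ℤ))) *
            (1 + Complex.exp (2 * Real.pi * Complex.I / a) ^ (-(b * (j : ℤ))))) /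
          ((1 - Complex.exp (2 * Real.pi * Complex.I / a) ^ (-(j : ℤ))) *
            (1 - Complex.exp (2 * Real.pi * Complex.I / a) ^ (-(b * (j : ℤ))))) :=
  dedekind_sum_cotangent_formula' ha (Complex.isPrimitiveRoot_exp a ha.ne') b hb
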